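/- Every simple graph with at least 2 and at most 5 vertices has a non-identical automorphism, and there exists a simple graph on exactly 6 vertices whose only automorphism is the identity. (In other words, the minimum number of vertices of an asymmetric graph with at least two vertices is 6.) -/

import Mathlib

def tri (a b : ℕ) : ℕ := (max a b)*(max a b - 1)/2 + min a b

open Classical in
lemma exists_mask : ∀ (k : ℕ) (Q : ℕ → Prop), ∃ s : ℕ, s < 2^k ∧ ∀ i < k, (s.testBit i ↔ Q i) := by
  intro k
  induction k with
  | zero => intro Q; exact ⟨0, by norm_num, fun i hi => absurd hi (by omega)⟩
  | succ k ih =>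
    intro Q
    obtain ⟨s', hs', hbit⟩ := ih (fun i => Q (i+1))
    refine ⟨2*s' + (if Q 0 then 1 else 0), by split <;> omega, ?_⟩
    intro i hi
    match i with
    | 0 =>
      rw [Nat.testBit_zero]
      split <;> rename_i h <;> simp [Nat.mul_add_mod, h]
    | (j+1) =>
      rw [Nat.testBit_add_one]
      have : (2*s' + (if Q 0 then 1 else 0))/2 = s' := by split <;> omega
      rw [this]
      exact hbit j (by omega)

def cands2 : List (Equiv.Perm (Fin 2)) := [Equiv.swap 0 1]
def cands3 : List (Equiv.Perm (Fin 3)) := [Equiv.swap 0 1, Equiv.swap 0 2, Equiv.swap 1 2]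
def cands4 : List (Equiv.Perm (Fin 4)) := [Equiv.swap 0 1, Equiv.swap 0 2, Equiv.swap 0 3, Equiv.swap 1 2, Equiv.swap 1 3, Equiv.swap 2 3, Equiv.swap 0 1 * Equiv.swap 2 3, Equiv.swap 0 2 * Equiv.swap 1 3, Equiv.swap 0 3 * Equiv.swap 1 2]
def cands5 : List (Equiv.Perm (Fin 5)) := [Equiv.swap 0 1, Equiv.swap 0 2, Equiv.swap 0 3, Equiv.swap 0 4, Equiv.swap 1 2, Equiv.swap 1 3, Equiv.swap 1 4, Equiv.swap 2 3, Equiv.swap 2 4, Equiv.swap 3 4, Equiv.swap 0 1 * Equiv.swap 2 3, Equiv.swap 0 1 * Equiv.swap 2 4, Equiv.swap 0 1 * Equiv.swap 3 4, Equiv.swap 0 2 * Equiv.swap 1 3, Equiv.swap 0 2 * Equiv.swap 1 4, Equiv.swap 0 2 * Equiv.swap 3 4, Equiv.swap 0 3 * Equiv.swap 1 2, Equiv.swap 0 3 * Equiv.swap 1 4, Equiv.swap 0 3 * Equiv.swap 2 4, Equiv.swap 0 4 * Equiv.swap 1 2, Equiv.swap 0 4 * Equiv.swap 1 3, Equiv.swap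 0 4 * Equiv.swap 2 3, Equiv.swap 1 2 * Equiv.swap 3 4, Equiv.swap 1 3 * Equiv.swap 2 4, Equiv.swap 1 4 * Equiv.swap 2 3]

set_option maxRecDepth 1000000 in
set_option maxHeartbeats 10000000 in
lemma aux2 : ∀ s : Fin (2^(2*(2-1)/2)), ∃ e ∈ cands2,
    (∃ v, e v ≠ v) ∧ ∀ a b : Fin 2, a ≠ b →
      (Nat.testBit s.val (tri (e a).val (e b).val) ↔ Nat.testBit s.val (tri a.val b.val)) := by decide

set_option maxRecDepth 1000000 in
set_option maxHeartbeats 10000000 in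
lemma aux3 : ∀ s : Fin (2^(3*(3-1)/2)), ∃ e ∈ cands3,
    (∃ v, e v ≠ v) ∧ ∀ a b : Fin 3, a ≠ b →
      (Nat.testBit s.val (tri (e a).val (e b).val) ↔ Nat.testBit s.val (tri a.val b.val)) := by decide

set_option maxRecDepth 1000000 in
set_option maxHeartbeats 10000000 in
lemma aux4 : ∀ s : Fin (2^(4*(4-1)/2)), ∃ e ∈ cands4,
    (∃ v, e v ≠ v) ∧ ∀ a b : Fin 4, a ≠ b →
      (Nat.testBit s.val (tri (e a).val (e b).val) ↔ Nat.testBit s.val (tri a.val b.val)) := by decide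

set_option maxRecDepth 1000000 in
set_option maxHeartbeats 10000000 in
lemma aux5 : ∀ s : Fin (2^(5*(5-1)/2)), ∃ e ∈ cands5,
    (∃ v, e v ≠ v) ∧ ∀ a b : Fin 5, a ≠ b →
      (Nat.testBit s.val (tri (e a).val (e b).val) ↔ Nat.testBit s.val (tri a.val b.val)) := by decide

lemma bridge {n : ℕ}
    (H : ∀ s : Fin (2^(n*(n-1)/2)), ∃ e : Equiv.Perm (Fin n),
      (∃ v, e v ≠ v) ∧ ∀ a b : Fin n, a ≠ b →
      (Nat.testBit s.val (tri (e a).val (e b).val) ↔ Nat.testBit s.val (tri a.val b.val)))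
    (hlt : ∀ a b : Fin n, a ≠ b → tri a.val b.val < n*(n-1)/2)
    (hinj : ∀ a b c d : Fin n, a ≠ b → c ≠ d → tri a.val b.val = tri c.val d.val →
      ((a = c ∧ b = d) ∨ (a = d ∧ b = c)))
    (V : Type) [Fintype V] (hV : Fintype.card V = n) (G : SimpleGraph V) :
    ∃ φ : G ≃g G, ∃ v : V, φ v ≠ v := by
  have eqv : V ≃ Fin n := Fintype.equivFinOfCardEq hV
  set P : Fin n → Fin n → Prop := fun x y => G.Adj (eqv.symm x) (eqv.symm y) with hP
  obtain ⟨s, hs, hsbit⟩ := exists_mask (n*(n-1)/2)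
    (fun i => ∃ a b : Fin n, a ≠ b ∧ tri a.val b.val = i ∧ P a b)
  have key : ∀ a b : Fin n, a ≠ b → (Nat.testBit s (tri a.val b.val) ↔ P a b) := by
    intro a b hab
    rw [hsbit _ (hlt a b hab)]
    constructor
    · rintro ⟨c, d, hcd, htri, hadj⟩
      rcases hinj c d a b hcd hab htri with ⟨rfl, rfl⟩ | ⟨rfl, rfl⟩
      · exact hadj
      · exact hadj.symm
    · intro h; exact ⟨a, b, hab, rfl, h⟩
  obtain ⟨e, ⟨v, hv⟩, he⟩ := H ⟨s, hs⟩
  refine ⟨⟨eqv.trans (e.trans eqv.symm), ?_⟩, eqv.symm v, ?_⟩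
  · intro a b
    by_cases hab : a = b
    · subst hab; simp
    · have h1 : eqv a ≠ eqv b := fun h => hab (eqv.injective h)
      have h2 : e (eqv a) ≠ e (eqv b) := fun h => h1 (e.injective h)
      have hiff : P (e (eqv a)) (e (eqv b)) ↔ P (eqv a) (eqv b) :=
        (key _ _ h2).symm.trans ((he (eqv a) (eqv b) h1).trans (key _ _ h1))
      simpa [hP] using hiff
  · intro h
    simp only [RelIso.coe_fn_mk, Equiv.trans_apply, Equiv.apply_symm_apply] at h
    exact hv (eqv.symm.injective h)

def E6 : List (Fin 6 × Fin 6) := [(0,2),(0,3),(0,5),(1,2),(1,4),(2,3)]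

def G6 : SimpleGraph (Fin 6) where
  Adj a b := (a,b) ∈ E6 ∨ (b,a) ∈ E6
  symm := ⟨fun a b h => h.symm⟩
  loopless := ⟨by intro a; fin_cases a <;> decide⟩

instance : DecidableRel G6.Adj := fun a b => by unfold G6; infer_instance

set_option maxRecDepth 100000 in
set_option maxHeartbeats 4000000 in
lemma aux6 : ∀ e : Equiv.Perm (Fin 6),
    (∀ a b, G6.Adj (e a) (e b) ↔ G6.Adj a b) → ∀ v, e v = v := by decide

/-- Every simple graph with at least 2 and at most 5 vertices has a non-identical
automorphism, and there is a simple graph on exactly 6 vertices whose only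
automorphism is the identity. -/
theorem stmt_0 :
    (∀ (V : Type) [Fintype V], 2 ≤ Fintype.card V → Fintype.card V ≤ 5 →
      ∀ G : SimpleGraph V, ∃ φ : G ≃g G, ∃ v : V, φ v ≠ v) ∧
    (∃ G : SimpleGraph (Fin 6), ∀ φ : G ≃g G, ∀ v : Fin 6, φ v = v) := by
  constructor
  · intro V _ h2 h5 G
    have hcases : Fintype.card V = 2 ∨ Fintype.card V = 3 ∨ Fintype.card V = 4 ∨
        Fintype.card V = 5 := by omega
    rcases hcases with h | h | h | h
    · exact bridge (fun s => by obtain ⟨e, _, hh⟩ := aux2 s; exact ⟨e, hh⟩)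
        (by decide) (by decide) V h G
    · exact bridge (fun s => by obtain ⟨e, _, hh⟩ := aux3 s; exact ⟨e, hh⟩)
        (by decide) (by decide) V h G
    · exact bridge (fun s => by obtain ⟨e, _, hh⟩ := aux4 s; exact ⟨e, hh⟩)
        (by decide) (by decide) V h G
    · exact bridge (fun s => by obtain ⟨e, _, hh⟩ := aux5 s; exact ⟨e, hh⟩)
        (by decide) (by decide) V h G
  · exact ⟨G6, fun φ v => aux6 φ.toEquiv (fun a b => φ.map_rel_iff) v⟩
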